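/- Let τ: End(W) → End(W) be the anti-involution τ(A) = υ^{−1}A*υ (the adjoint with respect to Ψ_W). For h ∈ Isom(X) stabilizing Y with (h−1)|_Y invertible, set h_G = (Ξ(h−1))^{−1} ∈ GL(W). Then: (i) 1 + h_G + τ(h_G) = 0; and (ii) h_G · θ(h_G) = −Ξ(h^{−1}), where θ(g) = τ(g)^{−1}. -/

import Mathlib

open LinearMap Function Module

/-- The ambient setup of the paper: `V = W × X × W'` carries a nondegenerate symmetric or
antisymmetric bilinear form `Φ` (over a field of characteristic not two), the subspaces
`W` and `W'` are totally isotropic, and `X` is orthogonal to `W + W'`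
(so that `X = (W + W')^⊥`). -/
structure GSSetup (F W X W' : Type) [Field F]
    [AddCommGroup W] [Module F W] [AddCommGroup X] [Module F X]
    [AddCommGroup W'] [Module F W'] : Type where
  Φ : (W × X × W') →ₗ[F] (W × X × W') →ₗ[F] F
  hchar : (2 : F) ≠ 0
  nondeg : ∀ v : W × X × W', (∀ u : W × X × W', Φ v u = 0) → v = 0
  symm_or_alt : (∀ a b : W × X × W', Φ a b = Φ b a) ∨ (∀ a b : W × X × W', Φ a b = - Φ b a)
  isoW : ∀ w₁ w₂ : W, Φ (w₁, 0, 0) (w₂, 0, 0) = 0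
  isoW' : ∀ w₁' w₂' : W', Φ (0, 0, w₁') (0, 0, w₂') = 0
  orthX : ∀ (x : X) (w : W) (w' : W'), Φ (0, x, 0) (w, 0, w') = 0

variable {F W X W' : Type} [Field F]
  [AddCommGroup W] [Module F W] [AddCommGroup X] [Module F X]
  [AddCommGroup W'] [Module F W']

/-- The orthogonal complement, inside `X`, of a subspace `Y ⊆ X` (with respect to the
restriction of `Φ` to `X`). -/
def perpY (S : GSSetup F W X W') (Y : Submodule F X) : Submodule F X where
  carrier := {x : X | ∀ y ∈ Y, S.Φ (0, x, 0) (0, y, 0) = 0}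
  add_mem' := by
    intro a b ha hb y hy
    have h : ((0 : W), a + b, (0 : W')) = ((0 : W), a, (0 : W')) + ((0 : W), b, (0 : W')) := by
      simp
    rw [h, map_add, LinearMap.add_apply, ha y hy, hb y hy, add_zero]
  zero_mem' := by
    intro y hy
    show S.Φ 0 (0, y, 0) = 0
    rw [map_zero]
    rfl
  smul_mem' := by
    intro c a ha y hy
    have h : ((0 : W), c • a, (0 : W')) = c • ((0 : W), a, (0 : W')) := by simp
    rw [h, map_smul, LinearMap.smul_apply, ha y hy, smul_zero]

/-- The map `Ξ : End(X) → End(W)`, `Ξ(A) = ξ ∘ A ∘ ξ⁺` where `ξ⁺ = ξ* ∘ υ` and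
`υ = (ξ ξ*)⁻¹` is realised by the equivalence `ue : W ≃ W'`. -/
def Xi (ξ : X →ₗ[F] W) (ξs : W' →ₗ[F] X) (ue : W ≃ₗ[F] W') (A : X →ₗ[F] X) : W →ₗ[F] W :=
  ξ ∘ₗ A ∘ₗ (ξs ∘ₗ ue.toLinearMap)

/-- The subgroup condition `h ∈ H_Y`: `h` is an isometry of `(X, Φ|_X)` fixing `Y^⊥`
pointwise. -/
def IsHY (S : GSSetup F W X W') (Y : Submodule F X) (h : X ≃ₗ[F] X) : Prop :=
  (∀ x y : X, S.Φ (0, h x, 0) (0, h y, 0) = S.Φ (0, x, 0) (0, y, 0)) ∧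
  ∀ x ∈ perpY S Y, h x = x

/-- The form `Ψ_W` on `W`: `Ψ_W(w₁, w₂) = Φ(ξ⁺ w₁, ξ⁺ w₂)` with `ξ⁺ = ξ* ∘ υ = ξs ∘ ue`. -/
def PsiW (S : GSSetup F W X W') (ξs : W' →ₗ[F] X) (ue : W ≃ₗ[F] W') (w₁ w₂ : W) : F :=
  S.Φ (0, ξs (ue w₁), 0) (0, ξs (ue w₂), 0)

/-- `Norm(n(ξ, η)) = 1 + ξ* ∘ η⁻¹ ∘ ξ`, the Goldberg–Shahidi norm of `n(ξ, η) ∈ N'`;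
here the invertible `η` is realised by the equivalence `ηe : W' ≃ W` and `ξs = ξ*`. -/
def NormMap (ξ : X →ₗ[F] W) (ξs : W' →ₗ[F] X) (ηe : W' ≃ₗ[F] W) : X →ₗ[F] X :=
  LinearMap.id + ξs ∘ₗ ηe.symm.toLinearMap ∘ₗ ξ

/-- Let `τ` be the adjoint anti-involution of `End(W)` with respect to
`Ψ_W`, and `θ(g) = τ(g)⁻¹`.  For an isometry `h` of `X` stabilizing `Y` with `(h − 1)|_Y`
invertible (so that `h_G = (Ξ(h − 1))⁻¹ ∈ GL(W)` exists, realised by the equivalence `hGe`):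
(i) `1 + h_G + τ(h_G) = 0`; and (ii) `h_G · θ(h_G) = −Ξ(h⁻¹)`. -/
theorem statement_11 [FiniteDimensional F W] [FiniteDimensional F X] [FiniteDimensional F W']
    (S : GSSetup F W X W') (Y : Submodule F X)
    (hYnd : ∀ y ∈ Y, (∀ z ∈ Y, S.Φ (0, y, 0) (0, z, 0) = 0) → y = 0)
    (hdim : Module.finrank F Y = Module.finrank F W)
    (ξ : X →ₗ[F] W)
    (hker : ∀ x ∈ perpY S Y, ξ x = 0)
    (hinj : ∀ x ∈ Y, ξ x = 0 → x = 0)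
    (hsurj : ∀ w : W, ∃ x ∈ Y, ξ x = w)
    (ξs : W' →ₗ[F] X)
    (hξs : ∀ (w' : W') (x : X), S.Φ (0, ξs w', 0) (0, x, 0) = S.Φ (0, 0, w') (ξ x, 0, 0))
    (ue : W ≃ₗ[F] W')
    (hue : ∀ w : W, ξ (ξs (ue w)) = w) (hue' : ∀ w' : W', ue (ξ (ξs w')) = w')
    -- `h ∈ Isom(X)` stabilizes `Y`
    (h : X ≃ₗ[F] X)
    (hiso : ∀ x y : X, S.Φ (0, h x, 0) (0, h y, 0) = S.Φ (0, x, 0) (0, y, 0))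
    (hstab : Submodule.map h.toLinearMap Y = Y)
    -- `hGe` realises `h_G = (Ξ(h − 1))⁻¹`
    (hGe : W ≃ₗ[F] W)
    (hinv1 : Xi ξ ξs ue (h.toLinearMap - LinearMap.id) ∘ₗ hGe.toLinearMap = LinearMap.id)
    (hinv2 : hGe.toLinearMap ∘ₗ Xi ξ ξs ue (h.toLinearMap - LinearMap.id) = LinearMap.id)
    -- `τe` realises `τ(h_G)`, the `Ψ_W`-adjoint of `h_G`
    (τe : W ≃ₗ[F] W)
        (hτ : ∀ w₁ w₂ : W, PsiW S ξs ue (τe w₁) w₂ = PsiW S ξs ue w₁ (hGe w₂)) :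
    -- (i) `1 + h_G + τ(h_G) = 0`
    ((LinearMap.id : W →ₗ[F] W) + hGe.toLinearMap + τe.toLinearMap = 0)
    -- (ii) `h_G ∘ θ(h_G) = −Ξ(h⁻¹)` where `θ(g) = τ(g)⁻¹`
    ∧ (hGe.toLinearMap ∘ₗ τe.symm.toLinearMap = - Xi ξ ξs ue h.symm.toLinearMap) := by
  classical
  set ξp : W →ₗ[F] X := ξs ∘ₗ ue.toLinearMap with hξpdef
  set j : X →ₗ[F] (W × X × W') :=
    (0 : X →ₗ[F] W).prod ((LinearMap.id : X →ₗ[F] X).prod (0 : X →ₗ[F] W')) with hjdef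
  have hj : ∀ x : X, j x = (0, x, 0) := fun x => rfl
  set BX : LinearMap.BilinForm F X := S.Φ.compl₁₂ j j with hBXdef
  have hBXapp : ∀ x y : X, BX x y = S.Φ (0, x, 0) (0, y, 0) := fun x y => rfl
  have hPsiBX : ∀ w₁ w₂ : W, PsiW S ξs ue w₁ w₂ = BX (ξp w₁) (ξp w₂) := fun _ _ => rfl
  have hXi : ∀ (Bm : X →ₗ[F] X) (w : W), Xi ξ ξs ue Bm w = ξ (Bm (ξp w)) := fun _ _ => rfl
  -- flip lemma (avoids carrying the sign ε)
  have hflip : ∀ a b c d : X, BX a b = BX c d → BX b a = BX d c := by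
    rcases S.symm_or_alt with hs | ha
    · intro a b c d hcd
      have e1 : BX b a = BX a b := hs _ _
      have e2 : BX d c = BX c d := hs _ _
      rw [e1, e2, hcd]
    · intro a b c d hcd
      have e1 : BX b a = -BX a b := ha _ _
      have e2 : BX d c = -BX c d := ha _ _
      rw [e1, e2, hcd]
  have hrefl : BX.IsRefl := by
    intro a b hab
    have h0 : BX a b = BX 0 0 := by simp [hab]
    have := hflip a b 0 0 h0
    simpa using this
  -- nondegeneracy of the restriction of Φ to X
  have hndX : BX.Nondegenerate := by
    refine (LinearMap.IsRefl.nondegenerate_iff_separatingLeft hrefl).mpr ?_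
    intro x hx
    have h0 : ((0 : W), x, (0 : W')) = 0 := by
      apply S.nondeg
      intro u
      obtain ⟨w, x', w'⟩ := u
      have hd : ((w, x', w') : W × X × W') = ((0 : W), x', (0 : W')) + (w, 0, w') := by
        simp [Prod.ext_iff]
      rw [hd, map_add]
      have h1 : S.Φ (0, x, 0) (0, x', 0) = 0 := hx x'
      rw [h1, S.orthX x w w', add_zero]
    exact congrArg (fun p : W × X × W' => p.2.1) h0
  -- basic facts about ξp
  have hB : ∀ (w : W) (x : X), BX (ξp w) x = S.Φ (0, 0, ue w) (ξ x, 0, 0) :=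
    fun w x => hξs (ue w) x
  have hξξp : ∀ w : W, ξ (ξp w) = w := fun w => hue w
  have f1 : ∀ (w : W) (z : X), BX (ξp w) z = BX (ξp w) (ξp (ξ z)) := by
    intro w z
    rw [hB, hB, hξξp]
  have f2 : ∀ (w : W) (z : X), BX z (ξp w) = BX (ξp (ξ z)) (ξp w) :=
    fun w z => hflip _ _ _ _ (f1 w z)
  have hBk : ∀ (w : W) (x : X), ξ x = 0 → BX (ξp w) x = 0 := by
    intro w x hx
    rw [hB, hx]
    exact map_zero _
  have hkB : ∀ (w : W) (x : X), ξ x = 0 → BX x (ξp w) = 0 :=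
    fun w x hx => hrefl _ _ (hBk w x hx)
  -- nondegeneracy of Ψ_W (on the left)
  have hndPsi : ∀ w₀ : W, (∀ w₂ : W, PsiW S ξs ue w₀ w₂ = 0) → w₀ = 0 := by
    intro w₀ hw
    have hz : ξp w₀ = 0 := by
      apply hndX.1
      intro y
      rw [f1 w₀ y]
      exact hw (ξ y)
    have := hξξp w₀
    rw [hz, map_zero] at this
    exact this.symm
  -- ker ξ = perpY
  have hperp_orth : perpY S Y = BX.orthogonal Y := by
    ext x
    constructor
    · intro hx y hy
      exact hrefl _ _ (hx y hy)
    · intro hx y hy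
      exact hrefl _ _ (hx y hy)
  have hrange : LinearMap.range ξ = ⊤ := by
    rw [LinearMap.range_eq_top]
    intro w
    obtain ⟨x, _, hx⟩ := hsurj w
    exact ⟨x, hx⟩
  have hfr : finrank F (perpY S Y) = finrank F X - finrank F W := by
    rw [hperp_orth, LinearMap.BilinForm.finrank_orthogonal hndX, hdim]
  have hkerfr : finrank F (LinearMap.ker ξ) = finrank F X - finrank F W := by
    have hrn := LinearMap.finrank_range_add_finrank_ker ξ
    rw [hrange, finrank_top] at hrn
    omega
  have hle : perpY S Y ≤ LinearMap.ker ξ := fun x hx => LinearMap.mem_ker.mpr (hker x hx)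
  have hkereq : LinearMap.ker ξ = perpY S Y :=
    (Submodule.eq_of_le_of_finrank_eq hle (by rw [hfr, hkerfr])).symm
  -- h⁻¹ preserves ker ξ
  have hker_hinv : ∀ x : X, ξ x = 0 → ξ (h.symm x) = 0 := by
    intro x hx
    have hxm : x ∈ perpY S Y := hkereq ▸ LinearMap.mem_ker.mpr hx
    have hmem : h.symm x ∈ perpY S Y := by
      intro y hy
      have h2 : S.Φ (0, h (h.symm x), 0) (0, h y, 0) = S.Φ (0, h.symm x, 0) (0, y, 0) :=
        hiso _ _
      rw [h.apply_symm_apply] at h2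
      rw [← h2]
      apply hxm
      rw [← hstab]
      exact Submodule.mem_map_of_mem hy
    exact LinearMap.mem_ker.mp (hle hmem)
  have hHdep : ∀ a b : X, ξ a = ξ b → ξ (h.symm a) = ξ (h.symm b) := by
    intro a b hab
    have h1 : ξ (a - b) = 0 := by rw [map_sub, hab, sub_self]
    have h2 := hker_hinv (a - b) h1
    rw [map_sub, map_sub] at h2
    exact sub_eq_zero.mp h2
  set A : X →ₗ[F] X := h.toLinearMap - LinearMap.id with hAdef
  have hAapp : ∀ x : X, A x = h x - x := fun x => rfl
  have hGinv : ∀ w : W, Xi ξ ξs ue A (hGe w) = w := by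
    intro w
    have := LinearMap.congr_fun hinv1 w
    simpa using this
  -- the key scalar identity
  have key : ∀ u₁ u₂ : W,
      PsiW S ξs ue (Xi ξ ξs ue A u₁) (Xi ξ ξs ue A u₂)
        + PsiW S ξs ue u₁ (Xi ξ ξs ue A u₂)
        + PsiW S ξs ue (Xi ξ ξs ue A u₁) u₂ = 0 := by
    intro u₁ u₂
    set x₁ : X := ξp u₁ with hx₁def
    set x₂ : X := ξp u₂ with hx₂def
    have hx₁ : ξ x₁ = u₁ := hξξp u₁
    have hx₂ : ξ x₂ = u₂ := hξξp u₂
    have hpx₁ : ξp (ξ x₁) = x₁ := by rw [hx₁]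
    have hpx₂ : ξp (ξ x₂) = x₂ := by rw [hx₂]
    set c₁ : X := h x₁ - ξp (ξ (h x₁)) with hc₁def
    set c₂ : X := h x₂ - ξp (ξ (h x₂)) with hc₂def
    have hξc₁ : ξ c₁ = 0 := by rw [hc₁def, map_sub, hξξp, sub_self]
    have hξc₂ : ξ c₂ = 0 := by rw [hc₂def, map_sub, hξξp, sub_self]
    have hAc₁ : A x₁ - ξp (ξ (A x₁)) = c₁ := by
      rw [hAapp, map_sub, map_sub, hpx₁, hc₁def]
      abel
    have hAc₂ : A x₂ - ξp (ξ (A x₂)) = c₂ := by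
      rw [hAapp, map_sub, map_sub, hpx₂, hc₂def]
      abel
    have t2 : PsiW S ξs ue u₁ (Xi ξ ξs ue A u₂) = BX x₁ (A x₂) := by
      rw [hPsiBX, hXi]
      exact (f1 u₁ (A x₂)).symm
    have t3 : PsiW S ξs ue (Xi ξ ξs ue A u₁) u₂ = BX (A x₁) x₂ := by
      rw [hPsiBX, hXi]
      exact (f2 u₂ (A x₁)).symm
    have hcc : BX c₁ c₂ = 0 := by
      have e1 : BX c₁ c₂ = BX c₁ (h x₂) - BX c₁ (ξp (ξ (h x₂))) := by
        rw [hc₂def, map_sub]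
      have e2 : BX c₁ (ξp (ξ (h x₂))) = 0 := hkB _ _ hξc₁
      have e3 : BX c₁ (h x₂) = BX (h.symm c₁) x₂ := by
        have := hiso (h.symm c₁) x₂
        rw [h.apply_symm_apply] at this
        rw [hBXapp, hBXapp]
        exact this
      have e4 : BX (h.symm c₁) x₂ = 0 := hkB _ _ (hker_hinv c₁ hξc₁)
      rw [e1, e2, e3, e4, sub_zero]
    have t1 : PsiW S ξs ue (Xi ξ ξs ue A u₁) (Xi ξ ξs ue A u₂)
        = BX (A x₁) (A x₂) - BX c₁ c₂ := by
      rw [hPsiBX, hXi, hXi]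
      have hdec₁ : A x₁ = ξp (ξ (A x₁)) + c₁ := by rw [← hAc₁]; abel
      have hdec₂ : A x₂ = ξp (ξ (A x₂)) + c₂ := by rw [← hAc₂]; abel
      have expand : BX (A x₁) (A x₂)
          = BX (ξp (ξ (A x₁))) (ξp (ξ (A x₂))) + BX (ξp (ξ (A x₁))) c₂
            + BX c₁ (ξp (ξ (A x₂))) + BX c₁ c₂ := by
        conv_lhs => rw [hdec₁, hdec₂]
        simp only [map_add, LinearMap.add_apply]
        ring
      rw [expand, hBk _ _ hξc₂, hkB _ _ hξc₁]
      ring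
    have hisoB : BX (h x₁) (h x₂) = BX x₁ x₂ := by
      rw [hBXapp, hBXapp]
      exact hiso x₁ x₂
    have hiso3 : BX (A x₁) x₂ + BX x₁ (A x₂) + BX (A x₁) (A x₂) = 0 := by
      simp only [hAapp, map_sub, LinearMap.sub_apply]
      rw [hisoB]
      ring
    rw [t1, t2, t3, hcc, sub_zero]
    linear_combination hiso3
  -- the identity (†)
  have dagger : ∀ w₁ w₂ : W,
      PsiW S ξs ue w₁ w₂ + PsiW S ξs ue (hGe w₁) w₂ + PsiW S ξs ue w₁ (hGe w₂) = 0 := by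
    intro w₁ w₂
    have hk := key (hGe w₁) (hGe w₂)
    rw [hGinv w₁, hGinv w₂] at hk
    exact hk
  -- part (i)
  have parti : (LinearMap.id : W →ₗ[F] W) + hGe.toLinearMap + τe.toLinearMap = 0 := by
    ext w
    simp only [LinearMap.add_apply, LinearMap.id_coe, id_eq, LinearMap.zero_apply,
      LinearEquiv.coe_coe]
    apply hndPsi
    intro w₂
    have hadd : PsiW S ξs ue (w + hGe w + τe w) w₂
        = PsiW S ξs ue w w₂ + PsiW S ξs ue (hGe w) w₂ + PsiW S ξs ue (τe w) w₂ := by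
      simp only [hPsiBX, map_add, LinearMap.add_apply]
    rw [hadd, hτ w w₂]
    exact dagger w w₂
  refine ⟨parti, ?_⟩
  -- part (ii)
  have hτeq : ∀ w : W, τe w = -w - hGe w := by
    intro w
    have hp := LinearMap.congr_fun parti w
    simp only [LinearMap.add_apply, LinearMap.id_coe, id_eq, LinearMap.zero_apply,
      LinearEquiv.coe_coe] at hp
    have := eq_neg_of_add_eq_zero_right hp
    rw [this]
    abel
  ext w
  simp only [LinearMap.comp_apply, LinearMap.neg_apply, LinearEquiv.coe_coe]
  set v : W := τe.symm w with hvdef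
  have hw : w = τe v := (τe.apply_symm_apply w).symm
  rw [hw, hτeq v]
  -- now the goal is: hGe v = - Xi ξ ξs ue h.symm.toLinearMap (-v - hGe v)
  have hz1 : ξ (h (ξp (hGe v))) = v + hGe v := by
    have hg := hGinv v
    rw [hXi, hAapp, map_sub, hξξp, sub_eq_iff_eq_add] at hg
    rw [hg]
  have e1 : Xi ξ ξs ue h.symm.toLinearMap (-v - hGe v)
      = - ξ (h.symm (ξp (v + hGe v))) := by
    rw [hXi]
    have hneg : ξp (-v - hGe v) = -(ξp (v + hGe v)) := by
      rw [map_sub, map_neg, map_add]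
      abel
    rw [hneg]
    simp only [LinearEquiv.coe_coe, map_neg]
  have e2 : ξ (h.symm (ξp (v + hGe v))) = hGe v := by
    have hdep := hHdep (ξp (v + hGe v)) (h (ξp (hGe v))) (by rw [hξξp, hz1])
    rw [hdep, h.symm_apply_apply, hξξp]
  rw [e1, e2, neg_neg]
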